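/- Define f : ℕ → ℕ by f(0) = 2, f(1) = 8, and f(m) = 7f(m−1) + 4f(m−2) for all m ≥ 2. Then for every m ≥ 1, f(m) equals the cardinality of the OP-LOCO code OPC(m). -/
import Mathlib


/-- The OP-LOCO code: words of length `m` over the alphabet `{0,...,7}`
(position `m-1` most significant) containing no contiguous subword `u 2 v` with
`u, v ∈ {0,1,4,5}` and no contiguous subword `u 5 v` with `u, v ∈ {2,3,6,7}`. -/
def OPC (m : ℕ) : Set (Fin m → Fin 8) :=
  {c | ∀ i : ℕ, ∀ h : i + 2 < m,
      ¬((c ⟨i + 2, h⟩ ∈ ({0, 1, 4, 5} : Set (Fin 8)) ∧ c ⟨i + 1, by omega⟩ = 2 ∧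
            c ⟨i, by omega⟩ ∈ ({0, 1, 4, 5} : Set (Fin 8))) ∨
        (c ⟨i + 2, h⟩ ∈ ({2, 3, 6, 7} : Set (Fin 8)) ∧ c ⟨i + 1, by omega⟩ = 5 ∧
            c ⟨i, by omega⟩ ∈ ({2, 3, 6, 7} : Set (Fin 8))))}

namespace OPCProof

def A : Finset (Fin 8) := {0, 1, 4, 5}
def B : Finset (Fin 8) := {2, 3, 6, 7}

def bad3 (a b c : Fin 8) : Prop :=
  (a ∈ A ∧ b = 2 ∧ c ∈ A) ∨ (a ∈ B ∧ b = 5 ∧ c ∈ B)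

instance (a b c : Fin 8) : Decidable (bad3 a b c) := by unfold bad3; infer_instance

def dang (a b : Fin 8) : Prop := (a = 2 ∧ b ∈ A) ∨ (a = 5 ∧ b ∈ B)

instance (a b : Fin 8) : Decidable (dang a b) := by unfold dang; infer_instance

def good (m : ℕ) (c : Fin m → Fin 8) : Prop :=
  ∀ k j i : Fin m, (j : ℕ) + 1 = k → (i : ℕ) + 2 = k → ¬ bad3 (c k) (c j) (c i)

instance (m : ℕ) : DecidablePred (good m) := fun c => by unfold good; infer_instance

lemma setform (a b c : Fin 8) :
    ((a ∈ ({0, 1, 4, 5} : Set (Fin 8)) ∧ b = 2 ∧ c ∈ ({0, 1, 4, 5} : Set (Fin 8))) ∨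
      (a ∈ ({2, 3, 6, 7} : Set (Fin 8)) ∧ b = 5 ∧ c ∈ ({2, 3, 6, 7} : Set (Fin 8))))
      ↔ bad3 a b c := by
  simp [bad3, A, B]

lemma mem_iff (m : ℕ) (c : Fin m → Fin 8) : c ∈ OPC m ↔ good m c := by
  constructor
  · intro h k j i hj hi hb
    have hk : (i : ℕ) + 2 < m := by omega
    apply h i.val hk
    have ek : (⟨(i : ℕ) + 2, hk⟩ : Fin m) = k := Fin.ext hi
    have ej : (⟨(i : ℕ) + 1, by omega⟩ : Fin m) = j := Fin.ext (show (i:ℕ)+1 = (j:ℕ) by omega)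
    have ei : (⟨(i : ℕ), by omega⟩ : Fin m) = i := Fin.ext rfl
    rw [ek, ej, ei, setform]
    exact hb
  · intro hg i h hb
    exact hg ⟨i + 2, h⟩ ⟨i + 1, by omega⟩ ⟨i, by omega⟩ rfl rfl ((setform _ _ _).mp hb)

/-- extend a word at the top -/
def ext (m : ℕ) (w : Fin m → Fin 8) (x : Fin 8) : Fin (m + 1) → Fin 8 :=
  fun i => if h : (i : ℕ) < m then w ⟨i, h⟩ else x

lemma ext_lt (m : ℕ) (w : Fin m → Fin 8) (x : Fin 8) (i : Fin (m + 1))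
    (h : (i : ℕ) < m) : ext m w x i = w ⟨i, h⟩ := dif_pos h

lemma ext_eq (m : ℕ) (w : Fin m → Fin 8) (x : Fin 8) (i : Fin (m + 1))
    (h : (i : ℕ) = m) : ext m w x i = x := dif_neg (by omega)

def E0 (m : ℕ) : (Fin (m + 1) → Fin 8) ≃ (Fin m → Fin 8) × Fin 8 where
  toFun c := (fun i => c i.castSucc, c (Fin.last m))
  invFun p := ext m p.1 p.2
  left_inv c := by
    funext i
    show ext m (fun i => c i.castSucc) (c (Fin.last m)) i = c i
    by_cases h : (i : ℕ) < m
    · rw [ext_lt m _ _ i h]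
      congr 1
    · rw [ext_eq m _ _ i (by omega)]
      congr 1
      exact Fin.ext (by simp [Fin.last]; omega)
  right_inv p := by
    obtain ⟨w, x⟩ := p
    refine Prod.ext ?_ ?_
    · funext i
      exact ext_lt m w x i.castSucc (by simp)
    · exact ext_eq m w x (Fin.last m) rfl

lemma card_succ (m : ℕ) (P : (Fin (m + 1) → Fin 8) → Prop) [DecidablePred P] :
    (Finset.univ.filter P).card
      = ∑ w : Fin m → Fin 8, (Finset.univ.filter fun x => P (ext m w x)).card := by
  rw [← Fintype.card_subtype]
  have e1 : {c // P c} ≃ {p : (Fin m → Fin 8) × Fin 8 // P (ext m p.1 p.2)} :=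
    (Equiv.subtypeEquiv (E0 m) (fun c => by
      rw [show ext m ((E0 m) c).1 ((E0 m) c).2 = (E0 m).symm ((E0 m) c) from rfl,
        Equiv.symm_apply_apply]))
  have e2 := Equiv.subtypeProdEquivSigmaSubtype (fun (w : Fin m → Fin 8) (x : Fin 8) =>
    P (ext m w x))
  rw [Fintype.card_congr (e1.trans e2), Fintype.card_sigma]
  exact Finset.sum_congr rfl (fun w _ => Fintype.card_subtype _)

lemma good_ext (m : ℕ) (w : Fin (m + 2) → Fin 8) (x : Fin 8) :
    good (m + 3) (ext (m + 2) w x)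
      ↔ good (m + 2) w ∧ ¬ bad3 x (w ⟨m + 1, by omega⟩) (w ⟨m, by omega⟩) := by
  constructor
  · intro H
    constructor
    · intro k j i hj hi hb
      apply H ⟨k, by omega⟩ ⟨j, by omega⟩ ⟨i, by omega⟩ hj hi
      rw [ext_lt _ _ _ _ (show ((⟨(k:ℕ), by omega⟩ : Fin (m+3)) : ℕ) < m + 2 from k.isLt),
        ext_lt _ _ _ _ (show ((⟨(j:ℕ), by omega⟩ : Fin (m+3)) : ℕ) < m + 2 from j.isLt),
        ext_lt _ _ _ _ (show ((⟨(i:ℕ), by omega⟩ : Fin (m+3)) : ℕ) < m + 2 from i.isLt)]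
      simpa using hb
    · intro hb
      apply H ⟨m + 2, by omega⟩ ⟨m + 1, by omega⟩ ⟨m, by omega⟩ rfl rfl
      rw [ext_eq _ _ _ _ rfl, ext_lt _ _ _ _ (show m + 1 < m + 2 by omega),
        ext_lt _ _ _ _ (show m < m + 2 by omega)]
      exact hb
  · rintro ⟨hg, hb⟩ k j i hj hi
    by_cases hk : (k : ℕ) < m + 2
    · rw [ext_lt _ _ _ _ hk, ext_lt _ _ _ _ (show (j:ℕ) < m + 2 by omega),
        ext_lt _ _ _ _ (show (i:ℕ) < m + 2 by omega)]
      exact hg _ _ _ (by simpa using hj) (by simpa using hi)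
    · have hk2 : (k : ℕ) = m + 2 := by omega
      rw [ext_eq _ _ _ _ hk2, ext_lt _ _ _ _ (show (j:ℕ) < m + 2 by omega),
        ext_lt _ _ _ _ (show (i:ℕ) < m + 2 by omega)]
      have ej : (⟨(j:ℕ), by omega⟩ : Fin (m+2)) = ⟨m + 1, by omega⟩ := Fin.ext (show (j:ℕ) = m + 1 by omega)
      have ei : (⟨(i:ℕ), by omega⟩ : Fin (m+2)) = ⟨m, by omega⟩ := Fin.ext (show (i:ℕ) = m by omega)
      rw [ej, ei]
      exact hb

lemma count1 : ∀ a b : Fin 8,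
    (Finset.univ.filter fun x => ¬ bad3 x a b).card = if dang a b then 4 else 8 := by decide

lemma count2 : ∀ a b : Fin 8,
    (Finset.univ.filter fun x => ¬ bad3 x a b ∧ dang x a).card
      = if dang a b then 0 else 1 := by decide

def dangEnd (m : ℕ) (c : Fin (m + 2) → Fin 8) : Prop :=
  dang (c ⟨m + 1, by omega⟩) (c ⟨m, by omega⟩)

instance (m : ℕ) : DecidablePred (dangEnd m) := fun c => by unfold dangEnd; infer_instance

lemma dangEnd_ext (m : ℕ) (w : Fin (m + 2) → Fin 8) (x : Fin 8) :
    dangEnd (m + 1) (ext (m + 2) w x) ↔ dang x (w ⟨m + 1, by omega⟩) := by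
  unfold dangEnd
  rw [ext_eq (m + 2) w x ⟨m + 1 + 1, by omega⟩ rfl,
    ext_lt (m + 2) w x ⟨m + 1, by omega⟩ (show m + 1 < m + 2 by omega)]

def Nc (m : ℕ) : ℕ := (Finset.univ.filter (good m)).card

def Ec (m : ℕ) : ℕ := ((Finset.univ.filter (good (m + 2))).filter (dangEnd m)).card

def Sc (m : ℕ) : ℕ :=
  ((Finset.univ.filter (good (m + 2))).filter (fun c => ¬ dangEnd m c)).card

lemma L0 (m : ℕ) : Nc (m + 2) = Ec m + Sc m :=
  (Finset.card_filter_add_card_filter_not _).symm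

lemma sum_if {α : Type*} (s : Finset α) (p : α → Prop) [DecidablePred p] (a b : ℕ) :
    (∑ x ∈ s, if p x then a else b)
      = a * (s.filter p).card + b * (s.filter fun x => ¬ p x).card := by
  rw [Finset.sum_ite, Finset.sum_const, Finset.sum_const, smul_eq_mul, smul_eq_mul]
  ring

lemma L1 (m : ℕ) : Nc (m + 3) = 4 * Ec m + 8 * Sc m := by
  have hfib : ∀ w : Fin (m + 2) → Fin 8,
      (Finset.univ.filter fun x => good (m + 3) (ext (m + 2) w x)).card
        = if good (m + 2) w then (if dangEnd m w then 4 else 8) else 0 := by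
    intro w
    by_cases hw : good (m + 2) w
    · rw [if_pos hw]
      have hfc : (Finset.univ.filter fun x => good (m + 3) (ext (m + 2) w x))
          = Finset.univ.filter fun x => ¬ bad3 x (w ⟨m + 1, by omega⟩) (w ⟨m, by omega⟩) :=
        Finset.filter_congr fun x _ => by simp only [good_ext, hw, true_and]
      rw [hfc, count1]
      rfl
    · rw [if_neg hw, Finset.card_eq_zero, Finset.filter_eq_empty_iff]
      intro x _
      rw [good_ext]
      tauto
  calc Nc (m + 3)
      = ∑ w : Fin (m + 2) → Fin 8,
          (Finset.univ.filter fun x => good (m + 3) (ext (m + 2) w x)).card :=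
        card_succ (m + 2) (good (m + 3))
    _ = ∑ w : Fin (m + 2) → Fin 8,
          (if good (m + 2) w then (if dangEnd m w then 4 else 8) else 0) :=
        Finset.sum_congr rfl fun w _ => hfib w
    _ = ∑ w ∈ Finset.univ.filter (good (m + 2)), (if dangEnd m w then 4 else 8) :=
        (Finset.sum_filter _ _).symm
    _ = 4 * Ec m + 8 * Sc m := sum_if _ _ 4 8

lemma L2 (m : ℕ) : Ec (m + 1) = Sc m := by
  have hfib : ∀ w : Fin (m + 2) → Fin 8,
      (Finset.univ.filter fun x =>
          good (m + 3) (ext (m + 2) w x) ∧ dangEnd (m + 1) (ext (m + 2) w x)).card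
        = if good (m + 2) w then (if dangEnd m w then 0 else 1) else 0 := by
    intro w
    by_cases hw : good (m + 2) w
    · rw [if_pos hw]
      have hfc : (Finset.univ.filter fun x =>
            good (m + 3) (ext (m + 2) w x) ∧ dangEnd (m + 1) (ext (m + 2) w x))
          = Finset.univ.filter fun x =>
            ¬ bad3 x (w ⟨m + 1, by omega⟩) (w ⟨m, by omega⟩) ∧ dang x (w ⟨m + 1, by omega⟩) :=
        Finset.filter_congr fun x _ => by
          rw [good_ext, dangEnd_ext]
          simp [hw]
      rw [hfc, count2]
      rfl
    · rw [if_neg hw, Finset.card_eq_zero, Finset.filter_eq_empty_iff]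
      intro x _
      rw [good_ext, dangEnd_ext]
      tauto
  calc Ec (m + 1)
      = (Finset.univ.filter fun c : Fin (m + 3) → Fin 8 =>
          good (m + 3) c ∧ dangEnd (m + 1) c).card := by
        rw [Ec, Finset.filter_filter]
    _ = ∑ w : Fin (m + 2) → Fin 8,
          (Finset.univ.filter fun x =>
            good (m + 3) (ext (m + 2) w x) ∧ dangEnd (m + 1) (ext (m + 2) w x)).card :=
        card_succ (m + 2) _
    _ = ∑ w : Fin (m + 2) → Fin 8,
          (if good (m + 2) w then (if dangEnd m w then 0 else 1) else 0) :=
        Finset.sum_congr rfl fun w _ => hfib w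
    _ = ∑ w ∈ Finset.univ.filter (good (m + 2)), (if dangEnd m w then 0 else 1) :=
        (Finset.sum_filter _ _).symm
    _ = 0 * Ec m + 1 * Sc m := sum_if _ _ 0 1
    _ = Sc m := by ring

end OPCProof

theorem stmt9 (f : ℕ → ℕ) (hf0 : f 0 = 2) (hf1 : f 1 = 8)
    (hrec : ∀ m : ℕ, 2 ≤ m → f m = 7 * f (m - 1) + 4 * f (m - 2)) :
    ∀ m : ℕ, 1 ≤ m → (OPC m).ncard = f m := by
  have hset : ∀ n, (OPC n).ncard = OPCProof.Nc n := by
    intro n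
    have : OPC n = ↑(Finset.univ.filter (OPCProof.good n)) := by
      ext c
      rw [OPCProof.mem_iff]
      simp
    rw [this, Set.ncard_coe_finset]
    rfl
  have key : ∀ k : ℕ, OPCProof.Nc (k + 2) = f (k + 2)
      ∧ f (k + 3) + 4 * OPCProof.Ec k = 8 * f (k + 2) := by
    intro k
    induction k with
    | zero =>
      have h2 : f 2 = 64 := by
        have h := hrec 2 (by omega)
        norm_num at h
        omega
      have h3 : f 3 = 480 := by
        have h := hrec 3 (by omega)
        norm_num at h
        omega
      have hn : OPCProof.Nc 2 = 64 := by decide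
      have he : OPCProof.Ec 0 = 8 := by decide
      show OPCProof.Nc 2 = f 2 ∧ f 3 + 4 * OPCProof.Ec 0 = 8 * f 2
      omega
    | succ n ih =>
      have l1 := OPCProof.L1 n
      have l0 := OPCProof.L0 n
      have l2 := OPCProof.L2 n
      have h3 : f (n + 3) = 7 * f (n + 2) + 4 * f (n + 1) := by
        have h := hrec (n + 3) (by omega)
        have e1 : n + 3 - 1 = n + 2 := by omega
        have e2 : n + 3 - 2 = n + 1 := by omega
        rw [e1, e2] at h
        exact h
      have h4 : f (n + 4) = 7 * f (n + 3) + 4 * f (n + 2) := by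
        have h := hrec (n + 4) (by omega)
        have e1 : n + 4 - 1 = n + 3 := by omega
        have e2 : n + 4 - 2 = n + 2 := by omega
        rw [e1, e2] at h
        exact h
      have hN : OPCProof.Nc (n + 3) = f (n + 3) := by omega
      refine ⟨hN, ?_⟩
      show f (n + 4) + 4 * OPCProof.Ec (n + 1) = 8 * f (n + 3)
      omega
  intro m hm
  match m, hm with
  | 1, _ =>
    rw [hset]
    have : OPCProof.Nc 1 = 8 := by decide
    omega
  | (k + 2), _ =>
    rw [hset]
    exact (key k).1
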